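/- Fix rows i₀ ≤ i₁ in an image with colors in [1,σ]. The number of maximal rectangles with these bottom and top rows is at most n·σ. -/
import Mathlib


/-- The fingerprint (set of distinct colors) of the rectangle ⟨i₀,i₁;j₀,j₁⟩ of the
image `M`. -/
def fpF {m n σ : ℕ} (M : Fin m → Fin n → Fin σ) (i0 i1 : Fin m) (j0 j1 : Fin n) :
    Finset (Fin σ) :=
  Finset.image (fun p : Fin m × Fin n => M p.1 p.2)
    (Finset.univ.filter fun p : Fin m × Fin n =>
      i0 ≤ p.1 ∧ p.1 ≤ i1 ∧ j0 ≤ p.2 ∧ p.2 ≤ j1)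

/-- A rectangle is maximal if no rectangle properly containing it has the same
fingerprint. -/
def MaximalRect {m n σ : ℕ} (M : Fin m → Fin n → Fin σ)
    (i0 i1 : Fin m) (j0 j1 : Fin n) : Prop :=
  i0 ≤ i1 ∧ j0 ≤ j1 ∧
  ∀ i0' i1' : Fin m, ∀ j0' j1' : Fin n,
    i0' ≤ i0 → i1 ≤ i1' → j0' ≤ j0 → j1 ≤ j1' →
    (i0', i1', j0', j1') ≠ (i0, i1, j0, j1) →
    fpF M i0' i1' j0' j1' ≠ fpF M i0 i1 j0 j1

lemma fpF_mono {m n σ : ℕ} (M : Fin m → Fin n → Fin σ) (i0 i1 : Fin m)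
    (j0 : Fin n) {j1 j1' : Fin n} (h : j1 ≤ j1') :
    fpF M i0 i1 j0 j1 ⊆ fpF M i0 i1 j0 j1' := by
  apply Finset.image_subset_image
  intro p hp
  simp only [Finset.mem_filter, Finset.mem_univ, true_and] at hp ⊢
  exact ⟨hp.1, hp.2.1, hp.2.2.1, le_trans hp.2.2.2 h⟩

lemma fpF_nonempty {m n σ : ℕ} (M : Fin m → Fin n → Fin σ) {i0 i1 : Fin m}
    {j0 j1 : Fin n} (hi : i0 ≤ i1) (hj : j0 ≤ j1) :
    (fpF M i0 i1 j0 j1).Nonempty := by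
  refine ⟨M i0 j0, ?_⟩
  simp only [fpF, Finset.mem_image, Finset.mem_filter, Finset.mem_univ, true_and]
  exact ⟨(i0, j0), ⟨le_refl _, hi, le_refl _, hj⟩, rfl⟩

/-- For fixed bottom and top rows, the number of maximal rectangles with these
rows is at most n·σ. -/
theorem statement6 (m n σ : ℕ) (M : Fin m → Fin n → Fin σ) (i0 i1 : Fin m)
    (hi : i0 ≤ i1) :
    {p : Fin n × Fin n | MaximalRect M i0 i1 p.1 p.2}.ncard ≤ n * σ := by
  set S := {p : Fin n × Fin n | MaximalRect M i0 i1 p.1 p.2} with hS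
  rcases S.eq_empty_or_nonempty with h | ⟨q, hq⟩
  · simp [h]
  · have hσ : 0 < σ := by
      obtain ⟨a, _⟩ := fpF_nonempty M hi hq.2.1
      exact a.pos
    set f : Fin n × Fin n → Fin n × Fin σ := fun p =>
      (p.1, ⟨(fpF M i0 i1 p.1 p.2).card - 1, by
        have h1 : (fpF M i0 i1 p.1 p.2).card ≤ σ := by
          simpa using Finset.card_le_card (Finset.subset_univ (fpF M i0 i1 p.1 p.2))
        omega⟩) with hf
    have hinj : Set.InjOn f S := by
      intro p hp q' hq' hfe
      have hj0 : p.1 = q'.1 := by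
        have := congrArg Prod.fst hfe
        simpa [hf] using this
      have hcard : (fpF M i0 i1 p.1 p.2).card = (fpF M i0 i1 q'.1 q'.2).card := by
        have := congrArg (fun x => (x.2 : ℕ)) hfe
        simp only [hf] at this
        have h1 : 1 ≤ (fpF M i0 i1 p.1 p.2).card :=
          Finset.Nonempty.card_pos (fpF_nonempty M hi hp.2.1)
        have h2 : 1 ≤ (fpF M i0 i1 q'.1 q'.2).card :=
          Finset.Nonempty.card_pos (fpF_nonempty M hi hq'.2.1)
        omega
      have key : ∀ a b : Fin n × Fin n, a ∈ S → b ∈ S → a.1 = b.1 →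
          (fpF M i0 i1 a.1 a.2).card = (fpF M i0 i1 b.1 b.2).card →
          a.2 ≤ b.2 → a.2 = b.2 := by
        intro a b ha hb hab hc hle
        by_contra hne
        have hsub : fpF M i0 i1 a.1 a.2 ⊆ fpF M i0 i1 a.1 b.2 := fpF_mono M i0 i1 a.1 hle
        have heq : fpF M i0 i1 a.1 b.2 = fpF M i0 i1 a.1 a.2 := by
          refine (Finset.eq_of_subset_of_card_le hsub ?_).symm
          rw [hc, hab]
        exact ha.2.2 i0 i1 a.1 b.2 (le_refl _) (le_refl _) (le_refl _) hle
          (by simp [Prod.ext_iff]; intro h; exact hne h.symm) heq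
      rcases le_total p.2 q'.2 with hle | hle
      · have := key p q' hp hq' hj0 hcard hle
        exact Prod.ext hj0 this
      · have := key q' p hq' hp hj0.symm (by rw [hcard]) hle
        exact Prod.ext hj0 this.symm
    calc S.ncard = (f '' S).ncard := (Set.ncard_image_of_injOn hinj).symm
      _ ≤ (Set.univ : Set (Fin n × Fin σ)).ncard :=
          Set.ncard_le_ncard (Set.subset_univ _) Set.finite_univ
      _ = n * σ := by simp [Set.ncard_univ]
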